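/- Let κ > 0, K > 0 and let ψ̂ : ℝ → ℂ satisfy ψ̂(0) = 0 and |ψ̂(u) − ψ̂(v)| ≤ K|u − v|^κ for all u, v ∈ ℝ. Let G ∈ L¹(ℝ², ℂ) satisfy ∫_ℝ ∫_ℝ |G(z,w)| |z|^κ |w|^κ dz dw < ∞, and define R(u,v) = (1/4π²) ∫_ℝ ∫_ℝ G(z,w) e^{izu} e^{iwv} dz dw. Let ψ ∈ L¹(ℝ) ∩ L²(ℝ) have Fourier transform ψ̂ (convention ψ̂(y) = ∫_ℝ e^{−iyx} ψ(x) dx), and set ψ_{jk}(x) = 2^{j/2} ψ(2^j x − k). Then for all j ∈ ℕ₀ and all k, l ∈ ℤ, |∫_ℝ ∫_ℝ R(u,v) conj(ψ_{jk}(u)) ψ_{jl}(v) du dv| ≤ (K² / (4π² · 2^{j(1+2κ)})) ∫_ℝ ∫_ℝ |G(z,w)| |z|^κ |w|^κ dz dw. -/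

import Mathlib

open MeasureTheory

lemma factor_bound (κ K : ℝ) (hκ : 0 < κ) (hK : 0 < K)
    (ψh ψ : ℝ → ℂ) (hψh0 : ψh 0 = 0)
    (hψhLip : ∀ u v : ℝ, ‖ψh u - ψh v‖ ≤ K * |u - v| ^ κ)
    (hψ1 : Integrable ψ)
    (hψhat : ∀ y : ℝ, ψh y = ∫ x : ℝ, Complex.exp (-(Complex.I * y * x)) * ψ x)
    (j : ℕ) (k : ℤ) (z : ℝ) :
    ‖∫ u : ℝ, Complex.exp (Complex.I * z * u) *
        ((((2 : ℝ) ^ ((j : ℝ) / 2) : ℝ) : ℂ) * ψ ((2 : ℝ) ^ j * u - (k : ℝ)))‖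
      ≤ K * |z| ^ κ * ((2 : ℝ) ^ ((j : ℝ) * (2⁻¹ + κ)))⁻¹ := by
  set T : ℝ := (2 : ℝ) ^ (j : ℕ) with hTdef
  have hT : 0 < T := by positivity
  set F : ℝ → ℂ := fun x => Complex.exp (Complex.I * z * (((x + k) / T : ℝ) : ℂ)) * ψ x with hF
  have h1 : ∀ u : ℝ, Complex.exp (Complex.I * z * u) * ψ (T * u - k) = F (T * u - k) := by
    intro u
    have : ((T * u - k + k) / T : ℝ) = u := by field_simp; ring
    simp only [hF, this]
  have h2 : (∫ u : ℝ, Complex.exp (Complex.I * z * u) *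
      ((((2 : ℝ) ^ ((j : ℝ) / 2) : ℝ) : ℂ) * ψ ((2 : ℝ) ^ j * u - (k : ℝ))))
      = (((2 : ℝ) ^ ((j : ℝ) / 2) : ℝ) : ℂ) * ∫ u : ℝ, F (T * u - k) := by
    rw [← integral_const_mul]
    congr 1; ext u
    rw [← h1 u]; ring
  have h3 : (∫ u : ℝ, F (T * u - k)) = |T⁻¹| • ∫ t : ℝ, F (t - k) := by
    have := MeasureTheory.Measure.integral_comp_mul_left (fun t => F (t - (k : ℝ))) T (F := ℂ)
    simpa using this
  have h4 : (∫ t : ℝ, F (t - k)) = ∫ t : ℝ, F t := integral_sub_right_eq_self F (k : ℝ)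
  have h5 : (∫ t : ℝ, F t)
      = Complex.exp (Complex.I * z * (((k : ℝ) / T : ℝ) : ℂ)) * ψh (-(z / T)) := by
    rw [hψhat]
    rw [← integral_const_mul]
    congr 1; ext x
    rw [hF]
    simp only
    rw [← mul_assoc, ← Complex.exp_add]
    congr 1
    push_cast
    have : (T : ℂ) ≠ 0 := by exact_mod_cast hT.ne'
    field_simp
    ring_nf
  have hnorm_exp : ∀ a : ℝ, ‖Complex.exp (Complex.I * z * (a : ℂ))‖ = 1 := by
    intro a; rw [Complex.norm_exp]; simp
  have hψh_bound : ‖ψh (-(z / T))‖ ≤ K * |z| ^ κ / T ^ κ := by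
    have := hψhLip (-(z / T)) 0
    rw [hψh0, sub_zero, sub_zero] at this
    calc ‖ψh (-(z / T))‖ ≤ K * |(-(z / T))| ^ κ := this
      _ = K * |z| ^ κ / T ^ κ := by
          rw [abs_neg, abs_div, abs_of_pos hT, Real.div_rpow (abs_nonneg z) hT.le]
          ring
  rw [h2, h3, h4, h5]
  rw [norm_mul, norm_smul, norm_mul, hnorm_exp, one_mul]
  rw [Complex.norm_real, Real.norm_eq_abs]
  have hpow : 0 < (2:ℝ) ^ ((j:ℝ)/2) := by positivity
  rw [abs_of_pos hpow, Real.norm_eq_abs, _root_.abs_abs, abs_of_pos (inv_pos.2 hT)]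
  have h2p : (0:ℝ) < 2 := two_pos
  have key : (2:ℝ) ^ ((j:ℝ)/2) * (T⁻¹ * (K * |z| ^ κ / T ^ κ))
      = K * |z| ^ κ * ((2 : ℝ) ^ ((j : ℝ) * (2⁻¹ + κ)))⁻¹ := by
    have hTr : T = (2:ℝ) ^ ((j:ℝ)) := by rw [hTdef, Real.rpow_natCast]
    rw [hTr, ← Real.rpow_mul h2p.le]
    have e2 : (2:ℝ) ^ ((j:ℝ)/2) * ((2:ℝ)^((j:ℝ)))⁻¹ * (((2:ℝ)^((j:ℝ)*κ))⁻¹)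
        = ((2:ℝ)^((j:ℝ)*(2⁻¹+κ)))⁻¹ := by
      rw [← Real.rpow_neg h2p.le, ← Real.rpow_neg h2p.le, ← Real.rpow_neg h2p.le,
        ← Real.rpow_add h2p, ← Real.rpow_add h2p]
      congr 1; ring
    rw [← e2]; ring
  calc (2:ℝ) ^ ((j:ℝ)/2) * (T⁻¹ * ‖ψh (-(z / T))‖)
      ≤ (2:ℝ) ^ ((j:ℝ)/2) * (T⁻¹ * (K * |z| ^ κ / T ^ κ)) := by gcongr
    _ = _ := key

/-- Example 5.1 (deterministic form): if `ψ̂` is `κ`-Lipschitz with `ψ̂(0) = 0` and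
`R(u,v) = (1/4π²)∫∫ G(z,w) e^{izu} e^{iwv} dz dw`, then the wavelet-coefficient
covariances `∫∫ R(u,v) conj(ψ_{jk}(u)) ψ_{jl}(v) du dv` decay like `2^{−j(1+2κ)}`. -/
theorem covariance_wavelet_coefficient_decay
    (κ K : ℝ) (hκ : 0 < κ) (hK : 0 < K)
    (ψh : ℝ → ℂ) (hψh0 : ψh 0 = 0)
    (hψhLip : ∀ u v : ℝ, ‖ψh u - ψh v‖ ≤ K * |u - v| ^ κ)
    (G : ℝ × ℝ → ℂ) (hG : Integrable G)
    (hGmom : Integrable (fun p : ℝ × ℝ => ‖G p‖ * |p.1| ^ κ * |p.2| ^ κ))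
    (R : ℝ → ℝ → ℂ)
    (hR : ∀ u v : ℝ, R u v = (1 / (4 * (Real.pi : ℂ) ^ 2)) *
      ∫ p : ℝ × ℝ, G p * Complex.exp (Complex.I * p.1 * u) * Complex.exp (Complex.I * p.2 * v))
    (ψ : ℝ → ℂ) (hψ1 : Integrable ψ) (hψ2 : MemLp ψ 2 (volume : Measure ℝ))
    (hψhat : ∀ y : ℝ, ψh y = ∫ x : ℝ, Complex.exp (-(Complex.I * y * x)) * ψ x)
    (ψjk : ℕ → ℤ → ℝ → ℂ)
    (hψjk : ∀ (j : ℕ) (k : ℤ) (x : ℝ),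
      ψjk j k x = (((2 : ℝ) ^ ((j : ℝ) / 2) : ℝ) : ℂ) * ψ ((2 : ℝ) ^ j * x - (k : ℝ)))
    (j : ℕ) (k l : ℤ) :
    ‖∫ u : ℝ, ∫ v : ℝ, R u v * (starRingEnd ℂ) (ψjk j k u) * ψjk j l v‖ ≤
      K ^ 2 / (4 * Real.pi ^ 2 * (2 : ℝ) ^ ((j : ℝ) * (1 + 2 * κ))) *
        ∫ p : ℝ × ℝ, ‖G p‖ * |p.1| ^ κ * |p.2| ^ κ := by
  have hnormE : ∀ z u : ℝ, ‖Complex.exp (Complex.I * z * u)‖ = 1 := by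
    intro z u; rw [Complex.norm_exp]; simp
  set D : ℝ := ((2 : ℝ) ^ ((j : ℝ) * (2⁻¹ + κ)))⁻¹ with hD
  have hDpos : 0 < D := by rw [hD]; positivity
  have h2jne : ((2 : ℝ) ^ j) ≠ 0 := by positivity
  have hΨint : ∀ m : ℤ, Integrable (ψjk j m) := by
    intro m
    have : ψjk j m = fun x => (((2 : ℝ) ^ ((j : ℝ) / 2) : ℝ) : ℂ) * ψ ((2 : ℝ) ^ j * x - (m : ℝ)) :=
      funext (hψjk j m)
    rw [this]
    exact ((hψ1.comp_sub_right (m : ℝ)).comp_mul_left' h2jne).const_mul _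
  have hΨkc : Integrable (fun u => (starRingEnd ℂ) (ψjk j k u)) := by
    refine (hΨint k).norm.mono' ?_ (Filter.Eventually.of_forall fun x => by simp)
    exact Complex.continuous_conj.comp_aestronglyMeasurable (hΨint k).1
  set M : ℝ := ∫ v : ℝ, ‖ψjk j l v‖ with hM
  set Bf : ℝ → ℂ := fun w => ∫ v : ℝ, Complex.exp (Complex.I * w * v) * ψjk j l v with hBf
  set Af : ℝ → ℂ := fun z => ∫ u : ℝ, Complex.exp (Complex.I * z * u) *
      (starRingEnd ℂ) (ψjk j k u) with hAf
  have hBf_cont : Continuous Bf := by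
    rw [hBf]
    apply continuous_of_dominated (bound := fun v => ‖ψjk j l v‖)
    · intro w
      exact (Continuous.aestronglyMeasurable (by fun_prop)).mul (hΨint l).1
    · intro w
      exact Filter.Eventually.of_forall fun v => le_of_eq (by rw [norm_mul, hnormE, one_mul])
    · exact (hΨint l).norm
    · exact Filter.Eventually.of_forall fun v => Continuous.mul (by fun_prop) continuous_const
  have hBf_bd : ∀ w : ℝ, ‖Bf w‖ ≤ M := by
    intro w
    simp only [hBf]
    calc ‖∫ v : ℝ, Complex.exp (Complex.I * w * v) * ψjk j l v‖
        ≤ ∫ v : ℝ, ‖Complex.exp (Complex.I * w * v) * ψjk j l v‖ :=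
          norm_integral_le_integral_norm _
      _ = M := by rw [hM]; congr 1; funext v; rw [norm_mul, hnormE, one_mul]
  have hBf_le : ∀ w : ℝ, ‖Bf w‖ ≤ K * |w| ^ κ * D := by
    intro w
    simp only [hBf]
    have h := factor_bound κ K hκ hK ψh ψ hψh0 hψhLip hψ1 hψhat j l w
    rw [hD]
    simp_rw [hψjk j l]
    exact h
  have hAf_le : ∀ z : ℝ, ‖Af z‖ ≤ K * |z| ^ κ * D := by
    intro z
    have hconj : (starRingEnd ℂ) (Af z)
        = ∫ u : ℝ, Complex.exp (Complex.I * ((-z : ℝ) : ℂ) * u) * ψjk j k u := by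
      simp only [hAf]
      rw [← integral_conj]
      congr 1; funext u
      rw [map_mul, Complex.conj_conj, ← Complex.exp_conj]
      congr 1
      simp only [map_mul, Complex.conj_I, Complex.conj_ofReal]
      push_cast
      ring
    calc ‖Af z‖ = ‖(starRingEnd ℂ) (Af z)‖ := (RCLike.norm_conj _).symm
      _ ≤ K * |(-z)| ^ κ * D := by
          rw [hconj, hD]
          have h := factor_bound κ K hκ hK ψh ψ hψh0 hψhLip hψ1 hψhat j k (-z)
          simp_rw [hψjk j k]
          exact h
      _ = K * |z| ^ κ * D := by rw [abs_neg]
  -- integrability for the two Fubini swaps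
  have H1 : ∀ u : ℝ, Integrable (Function.uncurry fun (v : ℝ) (p : ℝ × ℝ) =>
      G p * (Complex.exp (Complex.I * p.1 * u) * Complex.exp (Complex.I * p.2 * v)) * ψjk j l v)
      (volume.prod volume) := by
    intro u
    have base : Integrable (fun q : ℝ × (ℝ × ℝ) => ψjk j l q.1 * G q.2) (volume.prod volume) :=
      (hΨint l).mul_prod hG
    have hexp : AEStronglyMeasurable (fun q : ℝ × (ℝ × ℝ) =>
        Complex.exp (Complex.I * q.2.1 * u) * Complex.exp (Complex.I * q.2.2 * q.1))
        (volume.prod volume) := Continuous.aestronglyMeasurable (by fun_prop)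
    have h := base.bdd_mul (c := 1) hexp (Filter.Eventually.of_forall fun q => le_of_eq (by rw [norm_mul, hnormE, hnormE, one_mul]))
    exact h.congr (Filter.Eventually.of_forall fun q => by
      simp only [Function.uncurry]; ring)
  have GB : Integrable (fun p : ℝ × ℝ => G p * Bf p.2) := by
    have hm : AEStronglyMeasurable (fun p : ℝ × ℝ => Bf p.2) (volume : Measure (ℝ × ℝ)) :=
      (hBf_cont.comp continuous_snd).aestronglyMeasurable
    have h := hG.bdd_mul (c := M) hm (Filter.Eventually.of_forall fun p => hBf_bd p.2)
    exact h.congr (Filter.Eventually.of_forall fun p => mul_comm _ _)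
  have H2 : Integrable (Function.uncurry fun (u : ℝ) (p : ℝ × ℝ) =>
      (starRingEnd ℂ) (ψjk j k u) * ((G p * Bf p.2) * Complex.exp (Complex.I * p.1 * u)))
      (volume.prod volume) := by
    have base : Integrable (fun q : ℝ × (ℝ × ℝ) =>
        (starRingEnd ℂ) (ψjk j k q.1) * (G q.2 * Bf q.2.2)) (volume.prod volume) :=
      hΨkc.mul_prod GB
    have hexp : AEStronglyMeasurable (fun q : ℝ × (ℝ × ℝ) =>
        Complex.exp (Complex.I * q.2.1 * q.1)) (volume.prod volume) :=
      Continuous.aestronglyMeasurable (by fun_prop)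
    have h := base.bdd_mul (c := 1) hexp (Filter.Eventually.of_forall fun q => le_of_eq (hnormE _ _))
    exact h.congr (Filter.Eventually.of_forall fun q => by
      simp only [Function.uncurry]; ring)
  -- inner integral computation
  have inner_eq : ∀ u : ℝ, (∫ v : ℝ, R u v * (starRingEnd ℂ) (ψjk j k u) * ψjk j l v)
      = (1 / (4 * (Real.pi : ℂ) ^ 2)) * ((starRingEnd ℂ) (ψjk j k u) *
          ∫ p : ℝ × ℝ, (G p * Bf p.2) * Complex.exp (Complex.I * p.1 * u)) := by
    intro u
    have step1 : (fun v : ℝ => R u v * (starRingEnd ℂ) (ψjk j k u) * ψjk j l v)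
        = fun v : ℝ => (1 / (4 * (Real.pi : ℂ) ^ 2)) * ((starRingEnd ℂ) (ψjk j k u) *
            ∫ p : ℝ × ℝ, G p * (Complex.exp (Complex.I * p.1 * u) *
              Complex.exp (Complex.I * p.2 * v)) * ψjk j l v) := by
      funext v
      rw [hR u v]
      have h : (∫ p : ℝ × ℝ, G p * (Complex.exp (Complex.I * p.1 * u) *
            Complex.exp (Complex.I * p.2 * v)) * ψjk j l v)
          = (∫ p : ℝ × ℝ, G p * Complex.exp (Complex.I * p.1 * u) *
            Complex.exp (Complex.I * p.2 * v)) * ψjk j l v := by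
        rw [← integral_mul_const]
        congr 1; funext p; ring
      rw [h]; ring
    rw [step1, integral_const_mul, integral_const_mul]
    congr 2
    rw [integral_integral_swap (H1 u)]
    congr 1; funext p
    simp only [hBf]
    rw [← integral_const_mul, ← integral_mul_const]
    congr 1; funext v; ring
  rw [show (fun u : ℝ => ∫ v : ℝ, R u v * (starRingEnd ℂ) (ψjk j k u) * ψjk j l v)
      = fun u : ℝ => (1 / (4 * (Real.pi : ℂ) ^ 2)) * ((starRingEnd ℂ) (ψjk j k u) *
          ∫ p : ℝ × ℝ, (G p * Bf p.2) * Complex.exp (Complex.I * p.1 * u))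
    from funext inner_eq]
  rw [integral_const_mul]
  have outer_eq : (∫ u : ℝ, (starRingEnd ℂ) (ψjk j k u) *
      ∫ p : ℝ × ℝ, (G p * Bf p.2) * Complex.exp (Complex.I * p.1 * u))
      = ∫ p : ℝ × ℝ, (G p * Bf p.2) * Af p.1 := by
    rw [show (fun u : ℝ => (starRingEnd ℂ) (ψjk j k u) *
        ∫ p : ℝ × ℝ, (G p * Bf p.2) * Complex.exp (Complex.I * p.1 * u))
        = fun u : ℝ => ∫ p : ℝ × ℝ, (starRingEnd ℂ) (ψjk j k u) *
            ((G p * Bf p.2) * Complex.exp (Complex.I * p.1 * u))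
      from funext fun u => (integral_const_mul _ _).symm]
    rw [integral_integral_swap H2]
    congr 1; funext p
    have harr : (fun u : ℝ => (starRingEnd ℂ) (ψjk j k u) *
        ((G p * Bf p.2) * Complex.exp (Complex.I * (p.1 : ℂ) * (u : ℂ))))
        = fun u : ℝ => (G p * Bf p.2) *
          (Complex.exp (Complex.I * (p.1 : ℂ) * (u : ℂ)) * (starRingEnd ℂ) (ψjk j k u)) := by
      funext u; ring
    rw [harr, integral_const_mul]
  rw [outer_eq]
  have hcnorm : ‖(1 / (4 * (Real.pi : ℂ) ^ 2) : ℂ)‖ = (4 * Real.pi ^ 2)⁻¹ := by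
    rw [norm_div, norm_one]
    have h4 : (4 * (Real.pi : ℂ) ^ 2) = ((4 * Real.pi ^ 2 : ℝ) : ℂ) := by push_cast; ring
    rw [h4, Complex.norm_real, Real.norm_eq_abs, abs_of_pos (by positivity)]
    rw [one_div]
  have hDD : D * D = ((2 : ℝ) ^ ((j : ℝ) * (1 + 2 * κ)))⁻¹ := by
    rw [hD, ← mul_inv, ← Real.rpow_add two_pos]
    congr 2; ring
  calc ‖(1 / (4 * (Real.pi : ℂ) ^ 2)) * ∫ p : ℝ × ℝ, (G p * Bf p.2) * Af p.1‖
      = ‖(1 / (4 * (Real.pi : ℂ) ^ 2) : ℂ)‖ * ‖∫ p : ℝ × ℝ, (G p * Bf p.2) * Af p.1‖ :=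
        norm_mul _ _
    _ ≤ ‖(1 / (4 * (Real.pi : ℂ) ^ 2) : ℂ)‖ *
        ∫ p : ℝ × ℝ, ‖(G p * Bf p.2) * Af p.1‖ := by
        exact mul_le_mul_of_nonneg_left (norm_integral_le_integral_norm _) (norm_nonneg _)
    _ ≤ ‖(1 / (4 * (Real.pi : ℂ) ^ 2) : ℂ)‖ *
        ∫ p : ℝ × ℝ, (K ^ 2 * (D * D)) * (‖G p‖ * |p.1| ^ κ * |p.2| ^ κ) := by
        refine mul_le_mul_of_nonneg_left ?_ (norm_nonneg _)
        refine integral_mono_of_nonneg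
          (Filter.Eventually.of_forall fun p => norm_nonneg _)
          (hGmom.const_mul _) (Filter.Eventually.of_forall fun p => ?_)
        show ‖G p * Bf p.2 * Af p.1‖ ≤ K ^ 2 * (D * D) * (‖G p‖ * |p.1| ^ κ * |p.2| ^ κ)
        rw [norm_mul, norm_mul]
        calc ‖G p‖ * ‖Bf p.2‖ * ‖Af p.1‖
            ≤ ‖G p‖ * (K * |p.2| ^ κ * D) * (K * |p.1| ^ κ * D) := by
              gcongr
              · exact hBf_le p.2
              · exact hAf_le p.1
          _ = K ^ 2 * (D * D) * (‖G p‖ * |p.1| ^ κ * |p.2| ^ κ) := by ring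
    _ = ‖(1 / (4 * (Real.pi : ℂ) ^ 2) : ℂ)‖ * (K ^ 2 * (D * D)) *
        ∫ p : ℝ × ℝ, ‖G p‖ * |p.1| ^ κ * |p.2| ^ κ := by
        rw [integral_const_mul]; ring
    _ = K ^ 2 / (4 * Real.pi ^ 2 * (2 : ℝ) ^ ((j : ℝ) * (1 + 2 * κ))) *
        ∫ p : ℝ × ℝ, ‖G p‖ * |p.1| ^ κ * |p.2| ^ κ := by
        rw [hcnorm, hDD]
        ring
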